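/- Under the hypotheses of the borderline well-posedness theorem — ω, ψ : (0,T₀] → (0,∞) nonincreasing with ω(t)(1+ψ(t)) ≤ K₀|log t|, c ∈ C²((0,T₀]) with μ₁ ≤ c(t) ≤ μ₂ (μ₁ > 0), |c'(t)| ≤ ω(t)/t and |c''(t)| ≤ (ω(t)²/t²)exp(ψ(t)) — there exist positive constants λ₀, M, δ depending only on T₀, μ₁, μ₂, K₀ such that for every λ ≥ λ₀ every solution u_λ of u'' + λ²c(t)u = 0 satisfies |u_λ'(t)|² + λ²|u_λ(t)|² ≤ M·(|u_λ'(0)|² + λ²|u_λ(0)|²)·λ^δ for all t ∈ [0,T₀]. -/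

import Mathlib

open Set

lemma gron (E R : ℝ → ℝ) {p q : ℝ} (hpq : p ≤ q)
    (hEc : ContinuousOn E (Icc p q)) (hRc : ContinuousOn R (Icc p q))
    (h : ∀ t ∈ Ioo p q, ∃ e r : ℝ, HasDerivAt E e t ∧ HasDerivAt R r t ∧ e ≤ r * E t) :
    E q ≤ E p * Real.exp (R q - R p) := by
  rcases eq_or_lt_of_le hpq with rfl | hlt
  · simp
  have hmono : AntitoneOn (fun t => E t * Real.exp (-R t)) (Icc p q) := by
    apply antitoneOn_of_deriv_nonpos (convex_Icc p q)
    · exact hEc.mul ((Real.continuous_exp.comp_continuousOn hRc.neg))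
    · intro x hx
      rw [interior_Icc] at hx
      obtain ⟨e, r, hE, hR, _⟩ := h x hx
      exact (hE.mul ((hR.neg).exp)).differentiableAt.differentiableWithinAt
    · intro x hx
      rw [interior_Icc] at hx
      obtain ⟨e, r, hE, hR, hle⟩ := h x hx
      have hd : HasDerivAt (fun t => E t * Real.exp (-R t))
          (e * Real.exp (-R x) + E x * (Real.exp (-R x) * -r)) x := hE.mul ((hR.neg).exp)
      rw [hd.deriv]
      nlinarith [Real.exp_pos (-R x), mul_le_mul_of_nonneg_right hle (Real.exp_pos (-R x)).le]
  have h2 := hmono (left_mem_Icc.2 hpq) (right_mem_Icc.2 hpq) hpq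
  simp only at h2
  have h3 := mul_le_mul_of_nonneg_right h2 (Real.exp_pos (R q)).le
  calc E q = E q * Real.exp (-R q) * Real.exp (R q) := by
        rw [mul_assoc, ← Real.exp_add]; simp
    _ ≤ E p * Real.exp (-R p) * Real.exp (R q) := h3
    _ = E p * Real.exp (R q - R p) := by rw [mul_assoc, ← Real.exp_add]; ring_nf

lemma hasDerivAt_F (u c : ℝ → ℝ) (lam s : ℝ)
    (h1 : DifferentiableAt ℝ u s) (h2 : DifferentiableAt ℝ (deriv u) s)
    (hode : deriv (deriv u) s + lam ^ 2 * c s * u s = 0) :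
    HasDerivAt (fun r => (deriv u r) ^ 2 + lam ^ 2 * (u r) ^ 2)
      (2 * lam ^ 2 * (1 - c s) * (u s * deriv u s)) s := by
  have hu := h1.hasDerivAt
  have hu' := h2.hasDerivAt
  have hode' : deriv (deriv u) s = -(lam ^ 2 * c s * u s) := by linarith
  have := ((hu'.pow 2).add ((hu.pow 2).const_mul (lam ^ 2)))
  refine this.congr_deriv ?_
  rw [hode']; push_cast; ring

lemma hasDerivAt_G (u c : ℝ → ℝ) (lam s : ℝ)
    (h1 : DifferentiableAt ℝ u s) (h2 : DifferentiableAt ℝ (deriv u) s)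
    (hc1 : DifferentiableAt ℝ c s)
    (hode : deriv (deriv u) s + lam ^ 2 * c s * u s = 0) :
    HasDerivAt (fun r => (deriv u r) ^ 2 + lam ^ 2 * (c r * (u r) ^ 2))
      (lam ^ 2 * (deriv c s * (u s) ^ 2)) s := by
  have hu := h1.hasDerivAt
  have hu' := h2.hasDerivAt
  have hc := hc1.hasDerivAt
  have hode' : deriv (deriv u) s = -(lam ^ 2 * c s * u s) := by linarith
  have := ((hu'.pow 2).add ((hc.mul (hu.pow 2)).const_mul (lam ^ 2)))
  refine this.congr_deriv ?_
  rw [hode']; simp only [Pi.pow_apply]; push_cast; ring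

lemma hasDerivAt_H (u c : ℝ → ℝ) (lam s : ℝ)
    (h1 : DifferentiableAt ℝ u s) (h2 : DifferentiableAt ℝ (deriv u) s)
    (hc1 : DifferentiableAt ℝ c s) (hc2 : DifferentiableAt ℝ (deriv c) s)
    (hcpos : 0 < c s)
    (hode : deriv (deriv u) s + lam ^ 2 * c s * u s = 0) :
    HasDerivAt (fun r => (deriv u r + deriv c r / (4 * c r) * u r) ^ 2 / Real.sqrt (c r)
        + lam ^ 2 * (Real.sqrt (c r) * (u r) ^ 2))
      (2 * (deriv (deriv c) s / (4 * c s) - 5 * (deriv c s / (4 * c s)) ^ 2) / Real.sqrt (c s)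
        * (u s * (deriv u s + deriv c s / (4 * c s) * u s))) s := by
  have hu := h1.hasDerivAt
  have hu' := h2.hasDerivAt
  have hc := hc1.hasDerivAt
  have hc' := hc2.hasDerivAt
  have hcne : c s ≠ 0 := ne_of_gt hcpos
  have hσpos : 0 < Real.sqrt (c s) := Real.sqrt_pos.2 hcpos
  have hσne : Real.sqrt (c s) ≠ 0 := ne_of_gt hσpos
  have hσsq : Real.sqrt (c s) ^ 2 = c s := Real.sq_sqrt hcpos.le
  have hode' : deriv (deriv u) s = -(lam ^ 2 * c s * u s) := by linarith
  have h4c : (4 : ℝ) * c s ≠ 0 := by positivity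
  have hδ : HasDerivAt (fun r => deriv c r / (4 * c r))
      ((deriv (deriv c) s * (4 * c s) - deriv c s * (4 * deriv c s)) / (4 * c s) ^ 2) s :=
    hc'.div (hc.const_mul 4) h4c
  have hw : HasDerivAt (fun r => deriv u r + deriv c r / (4 * c r) * u r)
      (deriv (deriv u) s +
        ((deriv (deriv c) s * (4 * c s) - deriv c s * (4 * deriv c s)) / (4 * c s) ^ 2 * u s
          + deriv c s / (4 * c s) * deriv u s)) s := hu'.add (hδ.mul hu)
  have hσ : HasDerivAt (fun r => Real.sqrt (c r)) (deriv c s / (2 * Real.sqrt (c s))) s :=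
    hc.sqrt hcne
  have hmain := ((hw.pow 2).div hσ hσne).add ((hσ.mul (hu.pow 2)).const_mul (lam ^ 2))
  refine hmain.congr_deriv ?_
  rw [hode']
  simp only [Pi.pow_apply]
  generalize hg : Real.sqrt (c s) = σ at hσsq hσne hσpos ⊢
  rw [← hσsq]
  push_cast
  field_simp
  ring

lemma amgm (uv wv σv lamv : ℝ) (hσ : 0 < σv) (hl : 0 ≤ lamv) :
    2 * lamv * (|uv| * |wv|) ≤ wv ^ 2 / σv + lamv ^ 2 * (σv * uv ^ 2) := by
  have h2 : wv ^ 2 / σv + lamv ^ 2 * (σv * uv ^ 2)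
      = (wv ^ 2 + lamv ^ 2 * (σv ^ 2 * uv ^ 2)) / σv := by field_simp
  have h3 : lamv ^ 2 * σv ^ 2 * |uv| ^ 2 = lamv ^ 2 * σv ^ 2 * uv ^ 2 := by rw [sq_abs]
  rw [h2, le_div_iff₀ hσ]
  nlinarith [sq_nonneg (|wv| - lamv * σv * |uv|), sq_abs wv, h3]

lemma rateH (Δ σv uv wv Hv ρ lamv : ℝ) (hσ : 0 < σv) (hl : 0 < lamv) (hH : 0 ≤ Hv)
    (hAM : 2 * lamv * (|uv| * |wv|) ≤ Hv) (hΔ : |Δ| ≤ ρ * (lamv * σv)) :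
    2 * Δ / σv * (uv * wv) ≤ ρ * Hv := by
  have hρ : 0 ≤ ρ := by
    by_contra h
    push_neg at h
    nlinarith [abs_nonneg Δ, mul_pos hl hσ]
  calc 2 * Δ / σv * (uv * wv) ≤ |2 * Δ / σv * (uv * wv)| := le_abs_self _
    _ = (2 * |Δ| / σv) * (|uv| * |wv|) := by
        rw [abs_mul, abs_div, abs_mul, abs_mul]
        rw [abs_of_pos hσ, abs_of_nonneg (by norm_num : (0:ℝ) ≤ 2)]
    _ ≤ (2 * (ρ * (lamv * σv)) / σv) * (|uv| * |wv|) := by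
        gcongr
    _ = ρ * (2 * lamv * (|uv| * |wv|)) := by field_simp
    _ ≤ ρ * Hv := mul_le_mul_of_nonneg_left hAM hρ

lemma rateG (lam s W cs cps us u's μ₁ : ℝ) (hs : 0 < s) (hμ : 0 < μ₁) (hW : 0 ≤ W)
    (hcp : |cps| ≤ W / s) (hc : μ₁ ≤ cs) :
    lam ^ 2 * (cps * us ^ 2) ≤ (W / (μ₁ * s)) * (u's ^ 2 + lam ^ 2 * (cs * us ^ 2)) := by
  have h1 : cps ≤ W / s := (abs_le.1 hcp).2
  have h2 : lam ^ 2 * (cps * us ^ 2) ≤ lam ^ 2 * us ^ 2 * (W / s) := by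
    nlinarith [sq_nonneg (lam * us), sq_nonneg us]
  have h3 : lam ^ 2 * us ^ 2 * (W / s) ≤ (W / (μ₁ * s)) * (lam ^ 2 * (cs * us ^ 2)) := by
    have key : W / s * μ₁ ≤ W / s * cs :=
      mul_le_mul_of_nonneg_left hc (by positivity)
    have hrw : (W / (μ₁ * s)) * (lam ^ 2 * (cs * us ^ 2))
        = (lam ^ 2 * us ^ 2) * ((W / s * cs) / μ₁) := by field_simp
    have hrw2 : lam ^ 2 * us ^ 2 * (W / s) = (lam ^ 2 * us ^ 2) * ((W / s * μ₁) / μ₁) := by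
      field_simp
    rw [hrw, hrw2]
    gcongr
  have h4 : 0 ≤ (W / (μ₁ * s)) * u's ^ 2 := by positivity
  nlinarith [h2, h3, h4]

lemma equiv1 (m1 m2 σv lamv uv u'v dv : ℝ) (hm1 : 0 < m1)
    (h1 : Real.sqrt m1 ≤ σv) (h2 : σv ≤ Real.sqrt m2) (hl : 0 < lamv)
    (hd : |dv| ≤ lamv / (4 * m1)) :
    u'v ^ 2 + lamv ^ 2 * uv ^ 2 ≤
      (2 * Real.sqrt m2 + 1 / (8 * m1 ^ 2 * Real.sqrt m1) + 1 / Real.sqrt m1) *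
        ((u'v + dv * uv) ^ 2 / σv + lamv ^ 2 * (σv * uv ^ 2)) := by
  have hs1 : 0 < Real.sqrt m1 := Real.sqrt_pos.2 hm1
  have hσ : 0 < σv := lt_of_lt_of_le hs1 h1
  set W := u'v + dv * uv with hWdef
  set Hv := W ^ 2 / σv + lamv ^ 2 * (σv * uv ^ 2) with hHv
  have hHnn : 0 ≤ Hv := by rw [hHv]; positivity
  have hW2 : W ^ 2 ≤ Real.sqrt m2 * Hv := by
    have hWσ : W ^ 2 / σv ≤ Hv := by
      rw [hHv]
      nlinarith [mul_nonneg (mul_nonneg (sq_nonneg lamv) hσ.le) (sq_nonneg uv)]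
    have h3 : W ^ 2 ≤ Hv * σv := (div_le_iff₀ hσ).1 hWσ
    calc W ^ 2 ≤ Hv * σv := h3
      _ ≤ Hv * Real.sqrt m2 := mul_le_mul_of_nonneg_left h2 hHnn
      _ = Real.sqrt m2 * Hv := mul_comm _ _
  have hU2 : lamv ^ 2 * uv ^ 2 ≤ Hv / Real.sqrt m1 := by
    have ha : lamv ^ 2 * uv ^ 2 * σv ≤ Hv := by
      rw [hHv]
      nlinarith [div_nonneg (sq_nonneg W) hσ.le]
    have hb : lamv ^ 2 * uv ^ 2 ≤ Hv / σv := (le_div_iff₀ hσ).2 ha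
    calc lamv ^ 2 * uv ^ 2 ≤ Hv / σv := hb
      _ ≤ Hv / Real.sqrt m1 := by gcongr
  have hd2 : dv ^ 2 ≤ lamv ^ 2 / (16 * m1 ^ 2) := by
    have h5 := sq_le_sq' (neg_le_of_abs_le hd) (le_of_abs_le hd)
    calc dv ^ 2 ≤ (lamv / (4 * m1)) ^ 2 := h5
      _ = lamv ^ 2 / (16 * m1 ^ 2) := by rw [div_pow]; ring_nf
  have hu' : u'v ^ 2 ≤ 2 * W ^ 2 + 2 * (dv ^ 2 * uv ^ 2) := by
    rw [hWdef]
    nlinarith [sq_nonneg (u'v + 2 * (dv * uv))]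
  have hduv : dv ^ 2 * uv ^ 2 ≤ (1 / (16 * m1 ^ 2)) * (Hv / Real.sqrt m1) := by
    calc dv ^ 2 * uv ^ 2 ≤ (lamv ^ 2 / (16 * m1 ^ 2)) * uv ^ 2 :=
          mul_le_mul_of_nonneg_right hd2 (sq_nonneg uv)
      _ = (1 / (16 * m1 ^ 2)) * (lamv ^ 2 * uv ^ 2) := by ring
      _ ≤ (1 / (16 * m1 ^ 2)) * (Hv / Real.sqrt m1) := by
          apply mul_le_mul_of_nonneg_left hU2 (by positivity)
  have hrw1 : 2 * ((1 / (16 * m1 ^ 2)) * (Hv / Real.sqrt m1))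
      = (1 / (8 * m1 ^ 2 * Real.sqrt m1)) * Hv := by
    field_simp; ring
  have hrw2 : Hv / Real.sqrt m1 = (1 / Real.sqrt m1) * Hv := by
    field_simp
  clear_value W Hv
  nlinarith [hW2, hU2, hduv, hu', hrw1, hrw2, hHnn, Real.sqrt_nonneg m2]

lemma equiv2 (m1 m2 σv lamv uv u'v dv : ℝ) (hm1 : 0 < m1)
    (h1 : Real.sqrt m1 ≤ σv) (h2 : σv ≤ Real.sqrt m2) (hl : 0 < lamv)
    (hd : |dv| ≤ lamv / (4 * m1)) :
    (u'v + dv * uv) ^ 2 / σv + lamv ^ 2 * (σv * uv ^ 2) ≤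
      (2 / Real.sqrt m1 + 1 / (8 * m1 ^ 2 * Real.sqrt m1) + Real.sqrt m2) *
        (u'v ^ 2 + lamv ^ 2 * uv ^ 2) := by
  have hs1 : 0 < Real.sqrt m1 := Real.sqrt_pos.2 hm1
  have hσ : 0 < σv := lt_of_lt_of_le hs1 h1
  set W := u'v + dv * uv with hWdef
  have hd2 : dv ^ 2 ≤ lamv ^ 2 / (16 * m1 ^ 2) := by
    have h5 := sq_le_sq' (neg_le_of_abs_le hd) (le_of_abs_le hd)
    calc dv ^ 2 ≤ (lamv / (4 * m1)) ^ 2 := h5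
      _ = lamv ^ 2 / (16 * m1 ^ 2) := by rw [div_pow]; ring_nf
  have hWb : W ^ 2 ≤ 2 * u'v ^ 2 + 2 * (dv ^ 2 * uv ^ 2) := by
    rw [hWdef]
    nlinarith [sq_nonneg (u'v - dv * uv)]
  have hA : W ^ 2 / σv ≤ W ^ 2 / Real.sqrt m1 := by gcongr
  have hB : W ^ 2 / Real.sqrt m1 ≤
      (2 * u'v ^ 2 + 2 * (dv ^ 2 * uv ^ 2)) / Real.sqrt m1 := by gcongr
  have hC : lamv ^ 2 * (σv * uv ^ 2) ≤ Real.sqrt m2 * (lamv ^ 2 * uv ^ 2) := by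
    nlinarith [mul_le_mul_of_nonneg_right h2 (mul_nonneg (sq_nonneg lamv) (sq_nonneg uv))]
  have hD : dv ^ 2 * uv ^ 2 ≤ (1 / (16 * m1 ^ 2)) * (lamv ^ 2 * uv ^ 2) := by
    calc dv ^ 2 * uv ^ 2 ≤ (lamv ^ 2 / (16 * m1 ^ 2)) * uv ^ 2 :=
          mul_le_mul_of_nonneg_right hd2 (sq_nonneg uv)
      _ = (1 / (16 * m1 ^ 2)) * (lamv ^ 2 * uv ^ 2) := by ring
  have hE : (2 * u'v ^ 2 + 2 * (dv ^ 2 * uv ^ 2)) / Real.sqrt m1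
      = (2 / Real.sqrt m1) * u'v ^ 2 + (2 / Real.sqrt m1) * (dv ^ 2 * uv ^ 2) := by
    field_simp
  have hF : (2 / Real.sqrt m1) * (dv ^ 2 * uv ^ 2) ≤
      (2 / Real.sqrt m1) * ((1 / (16 * m1 ^ 2)) * (lamv ^ 2 * uv ^ 2)) :=
    mul_le_mul_of_nonneg_left hD (by positivity)
  have hG : (2 / Real.sqrt m1) * ((1 / (16 * m1 ^ 2)) * (lamv ^ 2 * uv ^ 2))
      = (1 / (8 * m1 ^ 2 * Real.sqrt m1)) * (lamv ^ 2 * uv ^ 2) := by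
    field_simp; ring
  have hnn1 : 0 ≤ (1 / (8 * m1 ^ 2 * Real.sqrt m1)) * u'v ^ 2 := by positivity
  have hnn2 : 0 ≤ Real.sqrt m2 * u'v ^ 2 :=
    mul_nonneg (Real.sqrt_nonneg m2) (sq_nonneg u'v)
  have hnn3 : 0 ≤ (2 / Real.sqrt m1) * (lamv ^ 2 * uv ^ 2) := by positivity
  clear_value W
  nlinarith [hA, hB, hC, hE, hF, hG, hnn1, hnn2, hnn3]


lemma rateF (lam cs us u's μ₂ : ℝ) (hl : 0 < lam) (hcl : 0 < cs) (hcu : cs ≤ μ₂) :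
    2 * lam ^ 2 * (1 - cs) * (us * u's) ≤ ((1 + μ₂) * lam) * (u's ^ 2 + lam ^ 2 * us ^ 2) := by
  have hp : (0:ℝ) ≤ (1 + μ₂) + (1 - cs) := by linarith
  have hq : (0:ℝ) ≤ (1 + μ₂) - (1 - cs) := by linarith
  nlinarith [mul_nonneg (mul_nonneg hl.le hp) (sq_nonneg (u's - lam * us)),
    mul_nonneg (mul_nonneg hl.le hq) (sq_nonneg (u's + lam * us))]


lemma deltaBound (Q P cs s ωs es Wc bv lam μ₁ σv : ℝ) (hμ₁ : 0 < μ₁) (hc : μ₁ ≤ cs)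
    (hs : 0 < s) (hlam : 0 < lam) (hωs : 0 ≤ ωs) (hes : 1 ≤ es)
    (hQ : |Q| ≤ ωs ^ 2 / s ^ 2 * es) (hP : |P| ≤ ωs / s)
    (hprod : ωs * es ≤ lam * bv) (hWc : ωs ≤ Wc) (hWc0 : 0 ≤ Wc) (hbv : 0 ≤ bv)
    (hσ1 : Real.sqrt μ₁ ≤ σv) :
    |Q / (4 * cs) - 5 * (P / (4 * cs)) ^ 2| ≤
      (((1 / (4 * μ₁) + 5 / (16 * μ₁ ^ 2)) / Real.sqrt μ₁) * Wc * bv / s ^ 2) * (lam * σv) := by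
  have hsq1 : 0 < Real.sqrt μ₁ := Real.sqrt_pos.2 hμ₁
  have hcs : 0 < cs := lt_of_lt_of_le hμ₁ hc
  have h4c : (0:ℝ) < 4 * cs := by linarith
  have h4m : (0:ℝ) < 4 * μ₁ := by linarith
  set X := ωs ^ 2 / s ^ 2 * es with hXdef
  have hXnn : 0 ≤ X := by
    rw [hXdef]
    have : (0:ℝ) ≤ ωs ^ 2 / s ^ 2 := by positivity
    nlinarith
  have t1 : |Q / (4 * cs)| = |Q| / (4 * cs) := by
    rw [abs_div, abs_of_pos h4c]
  have t2 : |Q| / (4 * cs) ≤ X / (4 * μ₁) :=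
    div_le_div₀ hXnn hQ h4m (by linarith)
  have hP2 : P ^ 2 ≤ (ωs / s) ^ 2 := sq_le_sq' (neg_le_of_abs_le hP) (le_of_abs_le hP)
  have t5 : (ωs / s) ^ 2 ≤ X := by
    rw [hXdef, div_pow]
    exact le_mul_of_one_le_right (by positivity) hes
  have t4 : (P / (4 * cs)) ^ 2 ≤ X / (4 * μ₁) ^ 2 := by
    rw [div_pow]
    calc P ^ 2 / (4 * cs) ^ 2 ≤ (ωs / s) ^ 2 / (4 * μ₁) ^ 2 :=
          div_le_div₀ (sq_nonneg _) hP2 (by positivity) (by nlinarith)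
      _ ≤ X / (4 * μ₁) ^ 2 := by gcongr
  have stepA : |Q / (4 * cs) - 5 * (P / (4 * cs)) ^ 2| ≤ X / (4 * μ₁) + 5 * (X / (4 * μ₁) ^ 2) := by
    have h6 := abs_sub (Q / (4 * cs)) (5 * (P / (4 * cs)) ^ 2)
    have h7 : |5 * (P / (4 * cs)) ^ 2| = 5 * (P / (4 * cs)) ^ 2 := by
      rw [abs_of_nonneg (by positivity)]
    have h8 : 5 * (P / (4 * cs)) ^ 2 ≤ 5 * (X / (4 * μ₁) ^ 2) := by linarith only [t4]
    linarith only [h6, h7, h8, t1, t2]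
  have stepC : X / (4 * μ₁) + 5 * (X / (4 * μ₁) ^ 2)
      = (1 / (4 * μ₁) + 5 / (16 * μ₁ ^ 2)) * X := by
    field_simp
    ring
  have stepB : X ≤ (Wc * (lam * bv)) / s ^ 2 := by
    rw [hXdef]
    have h9 : ωs ^ 2 * es = ωs * (ωs * es) := by ring
    have h10 : ωs * (ωs * es) ≤ Wc * (lam * bv) := by
      apply mul_le_mul hWc hprod (by positivity) hWc0
    calc ωs ^ 2 / s ^ 2 * es = (ωs ^ 2 * es) / s ^ 2 := by ring
      _ ≤ (Wc * (lam * bv)) / s ^ 2 := by rw [h9]; gcongr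
  have hC₀nn : (0:ℝ) ≤ 1 / (4 * μ₁) + 5 / (16 * μ₁ ^ 2) := by positivity
  have stepD : (1 / (4 * μ₁) + 5 / (16 * μ₁ ^ 2)) * ((Wc * (lam * bv)) / s ^ 2)
      = (((1 / (4 * μ₁) + 5 / (16 * μ₁ ^ 2)) / Real.sqrt μ₁) * Wc * bv / s ^ 2)
        * (lam * Real.sqrt μ₁) := by
    field_simp
  have coefnn : 0 ≤ ((1 / (4 * μ₁) + 5 / (16 * μ₁ ^ 2)) / Real.sqrt μ₁) * Wc * bv / s ^ 2 := by
    positivity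
  have stepE : (((1 / (4 * μ₁) + 5 / (16 * μ₁ ^ 2)) / Real.sqrt μ₁) * Wc * bv / s ^ 2)
      * (lam * Real.sqrt μ₁) ≤
      (((1 / (4 * μ₁) + 5 / (16 * μ₁ ^ 2)) / Real.sqrt μ₁) * Wc * bv / s ^ 2) * (lam * σv) := by
    apply mul_le_mul_of_nonneg_left _ coefnn
    exact mul_le_mul_of_nonneg_left hσ1 hlam.le
  calc |Q / (4 * cs) - 5 * (P / (4 * cs)) ^ 2| ≤ X / (4 * μ₁) + 5 * (X / (4 * μ₁) ^ 2) := stepA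
    _ = (1 / (4 * μ₁) + 5 / (16 * μ₁ ^ 2)) * X := stepC
    _ ≤ (1 / (4 * μ₁) + 5 / (16 * μ₁ ^ 2)) * ((Wc * (lam * bv)) / s ^ 2) :=
        mul_le_mul_of_nonneg_left stepB hC₀nn
    _ = _ * (lam * Real.sqrt μ₁) := stepD
    _ ≤ _ := stepE

set_option maxHeartbeats 2000000 in
theorem stmt8 (T₀ μ₁ μ₂ K₀ : ℝ) (hT : 0 < T₀) (hT1 : T₀ < 1)
    (hμ₁ : 0 < μ₁) (hμ : μ₁ < μ₂) (hK₀ : 0 < K₀) (ω ψ c : ℝ → ℝ)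
    (hω : AntitoneOn ω (Set.Ioc 0 T₀)) (hψ : AntitoneOn ψ (Set.Ioc 0 T₀))
    (hωpos : ∀ t ∈ Set.Ioc 0 T₀, 0 < ω t) (hψpos : ∀ t ∈ Set.Ioc 0 T₀, 0 < ψ t)
    (hbal : ∀ t ∈ Set.Ioc 0 T₀, ω t * (1 + ψ t) ≤ K₀ * |Real.log t|)
    (hccont : ContinuousOn c (Set.Icc 0 T₀))
    (hc1 : ∀ t ∈ Set.Ioc 0 T₀, DifferentiableAt ℝ c t)
    (hc2 : ∀ t ∈ Set.Ioc 0 T₀, DifferentiableAt ℝ (deriv c) t)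
    (hcb : ∀ t ∈ Set.Ioc 0 T₀, μ₁ ≤ c t ∧ c t ≤ μ₂)
    (hc' : ∀ t ∈ Set.Ioc 0 T₀, |deriv c t| ≤ ω t / t)
    (hc'' : ∀ t ∈ Set.Ioc 0 T₀,
      |deriv (deriv c) t| ≤ (ω t) ^ 2 / t ^ 2 * Real.exp (ψ t)) :
    ∃ lam₀ M δ : ℝ, 0 < lam₀ ∧ 0 < M ∧ 0 < δ ∧
      ∀ lam : ℝ, lam₀ ≤ lam → ∀ u : ℝ → ℝ,
        (∀ t ∈ Set.Icc 0 T₀, DifferentiableAt ℝ u t) →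
        (∀ t ∈ Set.Icc 0 T₀, DifferentiableAt ℝ (deriv u) t) →
        (∀ t ∈ Set.Icc 0 T₀, deriv (deriv u) t + lam ^ 2 * c t * u t = 0) →
        ∀ t ∈ Set.Icc 0 T₀,
          (deriv u t) ^ 2 + lam ^ 2 * (u t) ^ 2 ≤
            M * ((deriv u 0) ^ 2 + lam ^ 2 * (u 0) ^ 2) * Real.rpow lam δ := by
  have hμ₂ : 0 < μ₂ := hμ₁.trans hμ
  have hs1 : 0 < Real.sqrt μ₁ := Real.sqrt_pos.2 hμ₁
  have hs2 : 0 < Real.sqrt μ₂ := Real.sqrt_pos.2 hμ₂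
  have hμ₁sq : 0 < μ₁ ^ 2 := pow_pos hμ₁ 2
  set C₀ : ℝ := 1 / (4 * μ₁) + 5 / (16 * μ₁ ^ 2) with hC₀def
  have hC₀ : 0 < C₀ := by
    rw [hC₀def]
    have h4 : (0:ℝ) < 4 * μ₁ := by linarith
    have h16 : (0:ℝ) < 16 * μ₁ ^ 2 := mul_pos (by norm_num) hμ₁sq
    exact add_pos (div_pos one_pos h4) (div_pos (by norm_num) h16)
  set C₁ : ℝ := C₀ / Real.sqrt μ₁ with hC₁def
  have hC₁ : 0 < C₁ := div_pos hC₀ hs1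
  set A₀ : ℝ := (1 + μ₂) + 1 / μ₁ + C₁ with hA₀def
  have hA₀ : 0 < A₀ := by rw [hA₀def]; have := one_div_pos.2 hμ₁; linarith
  set CH : ℝ := 2 * Real.sqrt μ₂ + 1 / (8 * μ₁ ^ 2 * Real.sqrt μ₁) + 1 / Real.sqrt μ₁
    with hCHdef
  set CH' : ℝ := 2 / Real.sqrt μ₁ + 1 / (8 * μ₁ ^ 2 * Real.sqrt μ₁) + Real.sqrt μ₂
    with hCH'def
  have h8 : 0 < 8 * μ₁ ^ 2 * Real.sqrt μ₁ :=
    mul_pos (mul_pos (by norm_num) hμ₁sq) hs1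
  have hCH : 0 < CH := by
    rw [hCHdef]
    have := one_div_pos.2 h8
    have := one_div_pos.2 hs1
    linarith
  have hCH' : 0 < CH' := by
    rw [hCH'def]
    have := one_div_pos.2 h8
    have := div_pos (by norm_num : (0:ℝ) < 2) hs1
    linarith
  have hT₀mem : T₀ ∈ Ioc (0:ℝ) T₀ := ⟨hT, le_refl _⟩
  have hωT₀ : 0 < ω T₀ := hωpos T₀ hT₀mem
  have hψT₀ : 0 < ψ T₀ := hψpos T₀ hT₀mem
  refine ⟨max 3 (max (2 / T₀) (ω T₀ * Real.exp (ψ T₀) / T₀ + 1)),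
    (1 + CH * CH') * ((1 + 1 / μ₁) * ((1 + μ₂) * Real.exp A₀)), K₀ * A₀,
    lt_of_lt_of_le (by norm_num) (le_max_left _ _), ?_, mul_pos hK₀ hA₀, ?_⟩
  · have h1 : 0 < 1 + CH * CH' := by
      have h2 := mul_pos hCH hCH'
      linarith only [h2]
    have h2 : 0 < 1 + 1 / μ₁ := by have := one_div_pos.2 hμ₁; linarith
    have h3 : 0 < 1 + μ₂ := by linarith
    have := Real.exp_pos A₀
    positivity
  intro lam hlam u hu1 hu2 hode t ht
  have hlam3 : (3:ℝ) ≤ lam := le_trans (le_max_left _ _) hlam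
  have hlam0 : (0:ℝ) < lam := by linarith
  have hlam2T : 2 / T₀ ≤ lam :=
    le_trans (le_trans (le_max_left _ _) (le_max_right 3 _)) hlam
  have hlamω : ω T₀ * Real.exp (ψ T₀) / T₀ + 1 ≤ lam :=
    le_trans (le_trans (le_max_right _ _) (le_max_right 3 _)) hlam
  have hinvT : 1 / lam ≤ T₀ := by
    rw [div_le_iff₀ hlam0]
    have h2 : 2 ≤ lam * T₀ := by
      have h3 := (div_le_iff₀ hT).1 hlam2T
      linarith only [h3]
    linarith only [h2]
  set L := Real.log lam with hLdef
  have hL1 : 1 ≤ L := by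
    rw [hLdef, Real.le_log_iff_exp_le hlam0]
    linarith only [Real.exp_one_lt_d9, hlam3]
  have hL0 : 0 < L := by linarith
  -- energies
  set F : ℝ → ℝ := fun r => (deriv u r) ^ 2 + lam ^ 2 * (u r) ^ 2 with hFdef
  set G : ℝ → ℝ := fun r => (deriv u r) ^ 2 + lam ^ 2 * (c r * (u r) ^ 2) with hGdef
  set HH : ℝ → ℝ := fun r => (deriv u r + deriv c r / (4 * c r) * u r) ^ 2 / Real.sqrt (c r)
    + lam ^ 2 * (Real.sqrt (c r) * (u r) ^ 2) with hHdef
  have hFnn : ∀ r, 0 ≤ F r := by intro r; rw [hFdef]; positivity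
  have hcpos : ∀ s ∈ Ioc (0:ℝ) T₀, 0 < c s := fun s hs => lt_of_lt_of_le hμ₁ (hcb s hs).1
  -- zone sets
  set Sa := {s : ℝ | s ∈ Ioc (0:ℝ) T₀ ∧ ω s < lam * s} with hSadef
  set Sb := {s : ℝ | s ∈ Ioc (0:ℝ) T₀ ∧ ω s * Real.exp (ψ s) < lam * s} with hSbdef
  have hT₀Sb : T₀ ∈ Sb := by
    refine ⟨hT₀mem, ?_⟩
    have h1 := mul_le_mul_of_nonneg_right hlamω hT.le
    have h2 : ω T₀ * Real.exp (ψ T₀) / T₀ * T₀ = ω T₀ * Real.exp (ψ T₀) := by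
      field_simp
    linarith only [h1, h2, hT]
  have hexp1 : ∀ s ∈ Ioc (0:ℝ) T₀, ω s ≤ ω s * Real.exp (ψ s) := by
    intro s hs
    have h1 : 1 ≤ Real.exp (ψ s) := Real.one_le_exp (hψpos s hs).le
    have h2 := mul_le_mul_of_nonneg_left h1 (hωpos s hs).le
    linarith only [h2]
  have hT₀Sa : T₀ ∈ Sa := ⟨hT₀mem, lt_of_le_of_lt (hexp1 T₀ hT₀mem) hT₀Sb.2⟩
  have hSbSub : Sb ⊆ Sa := fun s hs => ⟨hs.1, lt_of_le_of_lt (hexp1 s hs.1) hs.2⟩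
  have hbddA : BddBelow Sa := ⟨0, fun s hs => hs.1.1.le⟩
  have hbddB : BddBelow Sb := ⟨0, fun s hs => hs.1.1.le⟩
  set a := sInf Sa with hadef
  set b := sInf Sb with hbdef
  have ha_le : a ≤ T₀ := csInf_le hbddA hT₀Sa
  have hb_le : b ≤ T₀ := csInf_le hbddB hT₀Sb
  have hab : a ≤ b := csInf_le_csInf hbddA ⟨T₀, hT₀Sb⟩ hSbSub
  have ha_pos : 0 < a := by
    have h1 : ω T₀ / lam ≤ a := by
      apply le_csInf ⟨T₀, hT₀Sa⟩
      intro s hs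
      have h2 : ω T₀ ≤ ω s := hω hs.1 hT₀mem hs.1.2
      have h3 : ω T₀ < lam * s := lt_of_le_of_lt h2 hs.2
      rw [div_le_iff₀ hlam0]
      linarith only [h3]
    exact lt_of_lt_of_le (div_pos hωT₀ hlam0) h1
  have hb_pos : 0 < b := lt_of_lt_of_le ha_pos hab
  have haIoc : a ∈ Ioc (0:ℝ) T₀ := ⟨ha_pos, ha_le⟩
  have hbIoc : b ∈ Ioc (0:ℝ) T₀ := ⟨hb_pos, hb_le⟩
  have hgtA : ∀ s, a < s → s ≤ T₀ → ω s < lam * s := by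
    intro s h1 h2
    obtain ⟨r, hrS, hr⟩ := exists_lt_of_csInf_lt ⟨T₀, hT₀Sa⟩ (show sInf Sa < s from h1)
    have hsIoc : s ∈ Ioc (0:ℝ) T₀ := ⟨lt_trans hrS.1.1 hr, h2⟩
    have h3 : ω s ≤ ω r := hω hrS.1 hsIoc hr.le
    have h4 : lam * r < lam * s := mul_lt_mul_of_pos_left hr hlam0
    exact lt_of_le_of_lt h3 (lt_trans hrS.2 h4)
  have hgtB : ∀ s, b < s → s ≤ T₀ → ω s * Real.exp (ψ s) < lam * s := by
    intro s h1 h2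
    obtain ⟨r, hrS, hr⟩ := exists_lt_of_csInf_lt ⟨T₀, hT₀Sb⟩ (show sInf Sb < s from h1)
    have hsIoc : s ∈ Ioc (0:ℝ) T₀ := ⟨lt_trans hrS.1.1 hr, h2⟩
    have h3 : ω s ≤ ω r := hω hrS.1 hsIoc hr.le
    have h5 : Real.exp (ψ s) ≤ Real.exp (ψ r) := Real.exp_le_exp.2 (hψ hrS.1 hsIoc hr.le)
    have h6 : ω s * Real.exp (ψ s) ≤ ω r * Real.exp (ψ r) :=
      mul_le_mul h3 h5 (Real.exp_pos _).le (hωpos r hrS.1).le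
    have h4 : lam * r < lam * s := mul_lt_mul_of_pos_left hr hlam0
    exact lt_of_le_of_lt h6 (lt_trans hrS.2 h4)
  have hltA : ∀ s, 0 < s → s < a → lam * s ≤ ω s := by
    intro s h1 h2
    by_contra hcon
    push_neg at hcon
    have : s ∈ Sa := ⟨⟨h1, le_trans h2.le ha_le⟩, hcon⟩
    exact absurd (csInf_le hbddA this) (not_le.2 h2)
  have hltB : ∀ s, 0 < s → s < b → lam * s ≤ ω s * Real.exp (ψ s) := by
    intro s h1 h2
    by_contra hcon
    push_neg at hcon
    have : s ∈ Sb := ⟨⟨h1, le_trans h2.le hb_le⟩, hcon⟩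
    exact absurd (csInf_le hbddB this) (not_le.2 h2)
  have hlogneg : ∀ s ∈ Ioc (0:ℝ) T₀, Real.log s < 0 :=
    fun s hs => Real.log_neg hs.1 (lt_of_le_of_lt hs.2 hT1)
  have hωbound : ∀ s ∈ Ioc (0:ℝ) T₀, ω s ≤ K₀ * (-Real.log s) := by
    intro s hs
    have h1 := hbal s hs
    rw [abs_of_neg (hlogneg s hs)] at h1
    have h2 := mul_nonneg (hωpos s hs).le (hψpos s hs).le
    linarith only [h1, h2]
  have hloglam : ∀ s, 1 / lam ≤ s → s ≤ T₀ → -Real.log s ≤ L := by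
    intro s hs1 hs2
    have h0 : (0:ℝ) < 1 / lam := by positivity
    have h1 : Real.log (1 / lam) ≤ Real.log s :=
      Real.log_le_log h0 hs1
    rw [one_div, Real.log_inv] at h1
    linarith
  have hlama : lam * a ≤ max 1 (K₀ * L) := by
    rcases le_or_gt a (1 / lam) with h | h
    · have : lam * a ≤ lam * (1 / lam) := mul_le_mul_of_nonneg_left h hlam0.le
      have h2 : lam * (1 / lam) = 1 := by field_simp
      exact le_trans (by linarith) (le_max_left _ _)
    · by_contra hcon
      push_neg at hcon
      have hc1 : K₀ * L < lam * a := lt_of_le_of_lt (le_max_right 1 _) hcon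
      have hc2 : (1:ℝ) < lam * a := lt_of_le_of_lt (le_max_left 1 (K₀ * L)) hcon
      have hKlam : K₀ * L / lam < a := (div_lt_iff₀ hlam0).2 (by linarith)
      obtain ⟨s, hs1, hs2⟩ := exists_between (max_lt h hKlam)
      have hs0 : 0 < s := lt_of_le_of_lt (le_trans (by positivity) (le_max_left (1/lam) (K₀*L/lam))) hs1
      have hsIoc : s ∈ Ioc (0:ℝ) T₀ := ⟨hs0, le_trans hs2.le ha_le⟩
      have h3 := hltA s hs0 hs2
      have h4 := hωbound s hsIoc
      have h5 := hloglam s (le_trans (le_max_left _ _) hs1.le) hsIoc.2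
      have h6 : lam * s ≤ K₀ * L := by
        have h5b := mul_le_mul_of_nonneg_left h5 hK₀.le
        linarith only [h3, h4, h5b]
      have h7 : K₀ * L / lam < s := lt_of_le_of_lt (le_max_right _ _) hs1
      rw [div_lt_iff₀ hlam0] at h7
      linarith
  have hωa : ∀ q, a < q → q ≤ T₀ → ω q ≤ lam * a := by
    intro q h1 h2
    by_contra hcon
    push_neg at hcon
    have h3 : a < min q (ω q / lam) := lt_min h1 ((lt_div_iff₀ hlam0).2 (by linarith))
    obtain ⟨s, hs1, hs2⟩ := exists_between h3
    have hsq : s < q := lt_of_lt_of_le hs2 (min_le_left _ _)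
    have hsIoc : s ∈ Ioc (0:ℝ) T₀ := ⟨lt_trans ha_pos hs1, le_trans hsq.le h2⟩
    have h4 : ω s < lam * s := hgtA s hs1 hsIoc.2
    have h5 : s < ω q / lam := lt_of_lt_of_le hs2 (min_le_right _ _)
    have h6 : lam * s < ω q := by rw [lt_div_iff₀ hlam0] at h5; linarith
    have h7 : ω q ≤ ω s := hω hsIoc ⟨lt_trans ha_pos h1, h2⟩ hsq.le
    linarith
  have hCbound : ∀ s, b < s → s ≤ T₀ → ω s * Real.exp (ψ s) ≤ lam * b := by
    intro s h1 h2
    by_contra hcon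
    push_neg at hcon
    have h3 : b < min s (ω s * Real.exp (ψ s) / lam) :=
      lt_min h1 ((lt_div_iff₀ hlam0).2 (by linarith))
    obtain ⟨r, hr1, hr2⟩ := exists_between h3
    have hrs : r < s := lt_of_lt_of_le hr2 (min_le_left _ _)
    have hrIoc : r ∈ Ioc (0:ℝ) T₀ := ⟨lt_trans hb_pos hr1, le_trans hrs.le h2⟩
    have h4 : ω r * Real.exp (ψ r) < lam * r := hgtB r hr1 hrIoc.2
    have h5 : r < ω s * Real.exp (ψ s) / lam := lt_of_lt_of_le hr2 (min_le_right _ _)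
    have h6 : lam * r < ω s * Real.exp (ψ s) := by rw [lt_div_iff₀ hlam0] at h5; linarith
    have h7 : ω s * Real.exp (ψ s) ≤ ω r * Real.exp (ψ r) :=
      mul_le_mul (hω hrIoc ⟨lt_trans hb_pos h1, h2⟩ hrs.le)
        (Real.exp_le_exp.2 (hψ hrIoc ⟨lt_trans hb_pos h1, h2⟩ hrs.le))
        (Real.exp_pos _).le (hωpos r hrIoc).le
    linarith
  set m := max a (min b (1 / lam)) with hmdef
  have hm_a : a ≤ m := le_max_left _ _
  have hm_b : m ≤ b := max_le hab (min_le_left _ _)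
  have hm_pos : 0 < m := lt_of_lt_of_le ha_pos hm_a
  have hm_sub : m - a ≤ 1 / lam := by
    rcases le_total (min b (1 / lam)) a with hc | hc
    · rw [hmdef, max_eq_left hc]
      simp only [sub_self]
      positivity
    · rw [hmdef, max_eq_right hc]
      have := min_le_right b (1 / lam)
      linarith
  have hm_ge : m < b → 1 / lam ≤ m := by
    intro hmb
    rcases le_total b (1 / lam) with hc | hc
    · exfalso
      rw [hmdef, min_eq_left hc, max_eq_right hab] at hmb
      exact lt_irrefl b hmb
    · rw [hmdef, min_eq_right hc]
      exact le_max_right _ _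
  have hlamne : lam ≠ 0 := ne_of_gt hlam0
  have hμ₁ne : μ₁ ≠ 0 := ne_of_gt hμ₁
  -- continuity
  have hFca : ∀ s ∈ Icc (0:ℝ) T₀, ContinuousAt F s := by
    intro s hs
    rw [hFdef]
    exact ((hu2 s hs).continuousAt.pow 2).add
      (((hu1 s hs).continuousAt.pow 2).const_mul (lam ^ 2))
  have hGca : ∀ s ∈ Ioc (0:ℝ) T₀, ContinuousAt G s := by
    intro s hs
    have hsIcc : s ∈ Icc (0:ℝ) T₀ := ⟨hs.1.le, hs.2⟩
    rw [hGdef]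
    exact ((hu2 s hsIcc).continuousAt.pow 2).add
      (((hc1 s hs).continuousAt.mul ((hu1 s hsIcc).continuousAt.pow 2)).const_mul (lam ^ 2))
  have hGnn : ∀ s ∈ Ioc (0:ℝ) T₀, 0 ≤ G s := by
    intro s hs
    rw [hGdef]
    exact add_nonneg (sq_nonneg _)
      (mul_nonneg (sq_nonneg lam) (mul_nonneg (hcpos s hs).le (sq_nonneg (u s))))
  -- zone A chain
  have chainA : ∀ x, x ∈ Icc (0:ℝ) T₀ → x ≤ a →
      F x ≤ Real.exp ((1 + μ₂) * max 1 (K₀ * L)) * F 0 := by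
    intro x hx hxa
    have hgr : F x ≤ F 0 * Real.exp (((1 + μ₂) * lam) * x - ((1 + μ₂) * lam) * 0) := by
      apply gron F (fun s => ((1 + μ₂) * lam) * s) hx.1
      · intro s hs
        exact (hFca s ⟨hs.1, le_trans hs.2 hx.2⟩).continuousWithinAt
      · exact (continuous_const.mul continuous_id).continuousOn
      · intro s hs
        have hsIcc : s ∈ Icc (0:ℝ) T₀ := ⟨hs.1.le, le_trans hs.2.le hx.2⟩
        have hsIoc : s ∈ Ioc (0:ℝ) T₀ := ⟨hs.1, hsIcc.2⟩
        obtain ⟨hcl, hcu⟩ := hcb s hsIoc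
        refine ⟨2 * lam ^ 2 * (1 - c s) * (u s * deriv u s), (1 + μ₂) * lam, ?_, ?_, ?_⟩
        · rw [hFdef]
          exact hasDerivAt_F u c lam s (hu1 s hsIcc) (hu2 s hsIcc) (hode s hsIcc)
        · simpa using (hasDerivAt_id s).const_mul ((1 + μ₂) * lam)
        · simp only [hFdef]
          exact rateF lam (c s) (u s) (deriv u s) μ₂ hlam0 (lt_of_lt_of_le hμ₁ hcl) hcu
    have hexp : ((1 + μ₂) * lam) * x - ((1 + μ₂) * lam) * 0 ≤ (1 + μ₂) * max 1 (K₀ * L) := by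
      have h1 : lam * x ≤ lam * a := mul_le_mul_of_nonneg_left hxa hlam0.le
      have h2 : lam * x ≤ max 1 (K₀ * L) := le_trans h1 hlama
      have h3 := mul_le_mul_of_nonneg_left h2 (show (0:ℝ) ≤ 1 + μ₂ by linarith)
      linarith
    calc F x ≤ F 0 * Real.exp (((1 + μ₂) * lam) * x - ((1 + μ₂) * lam) * 0) := hgr
      _ ≤ F 0 * Real.exp ((1 + μ₂) * max 1 (K₀ * L)) :=
          mul_le_mul_of_nonneg_left (Real.exp_le_exp.2 hexp) (hFnn 0)
      _ = Real.exp ((1 + μ₂) * max 1 (K₀ * L)) * F 0 := mul_comm _ _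
  -- zone B part 1
  have subB1 : ∀ x, a ≤ x → x ≤ m → G x ≤ Real.exp (1 / μ₁) * G a := by
    intro x hax hxm
    have hxT : x ≤ T₀ := le_trans hxm (le_trans hm_b hb_le)
    have hgr : G x ≤ G a * Real.exp ((lam / μ₁) * x - (lam / μ₁) * a) := by
      apply gron G (fun s => (lam / μ₁) * s) hax
      · intro s hs
        exact (hGca s ⟨lt_of_lt_of_le ha_pos hs.1, le_trans hs.2 hxT⟩).continuousWithinAt
      · exact (continuous_const.mul continuous_id).continuousOn
      · intro s hs
        have hsIoc : s ∈ Ioc (0:ℝ) T₀ := ⟨lt_trans ha_pos hs.1, le_trans hs.2.le hxT⟩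
        have hsIcc : s ∈ Icc (0:ℝ) T₀ := ⟨hsIoc.1.le, hsIoc.2⟩
        refine ⟨lam ^ 2 * (deriv c s * (u s) ^ 2), lam / μ₁, ?_, ?_, ?_⟩
        · rw [hGdef]
          exact hasDerivAt_G u c lam s (hu1 s hsIcc) (hu2 s hsIcc) (hc1 s hsIoc) (hode s hsIcc)
        · simpa using (hasDerivAt_id s).const_mul (lam / μ₁)
        · have hωs : ω s ≤ lam * s := (hgtA s hs.1 hsIoc.2).le
          have hs0' : 0 < s := hsIoc.1
          have hcp : |deriv c s| ≤ (lam * s) / s := le_trans (hc' s hsIoc) (by gcongr)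
          have hr := rateG lam s (lam * s) (c s) (deriv c s) (u s) (deriv u s) μ₁
            hsIoc.1 hμ₁ (mul_nonneg hlam0.le hsIoc.1.le) hcp (hcb s hsIoc).1
          have heq : (lam * s) / (μ₁ * s) = lam / μ₁ := by
            rw [mul_comm lam s, mul_comm μ₁ s, mul_div_mul_left _ _ (ne_of_gt hsIoc.1)]
          rw [heq] at hr
          simp only [hGdef]
          exact hr
    have hexp : (lam / μ₁) * x - (lam / μ₁) * a ≤ 1 / μ₁ := by
      have h1 : x - a ≤ 1 / lam := le_trans (by linarith) hm_sub
      have h2 : (lam / μ₁) * (x - a) ≤ (lam / μ₁) * (1 / lam) :=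
        mul_le_mul_of_nonneg_left h1 (div_nonneg hlam0.le hμ₁.le)
      have h3 : (lam / μ₁) * (1 / lam) = 1 / μ₁ := by field_simp
      linarith
    calc G x ≤ G a * Real.exp ((lam / μ₁) * x - (lam / μ₁) * a) := hgr
      _ ≤ G a * Real.exp (1 / μ₁) :=
          mul_le_mul_of_nonneg_left (Real.exp_le_exp.2 hexp) (hGnn a haIoc)
      _ = Real.exp (1 / μ₁) * G a := mul_comm _ _
  -- zone B part 2
  have subB2 : ∀ x, m < x → x < b → G x ≤ Real.exp (K₀ * L / μ₁) * G m := by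
    intro x hmx hxb
    have hxIoc : x ∈ Ioc (0:ℝ) T₀ := ⟨lt_trans hm_pos hmx, le_trans hxb.le hb_le⟩
    have h1m : 1 / lam ≤ m := hm_ge (lt_trans hmx hxb)
    have hωx : ω x < lam * x := hgtA x (lt_of_le_of_lt hm_a hmx) hxIoc.2
    have hωxpos := hωpos x hxIoc
    set D := 1 + Real.log (lam * x / ω x) with hDdef
    have hD1 : 1 ≤ D := by
      rw [hDdef]
      have h4 : (1:ℝ) ≤ lam * x / ω x := (one_le_div hωxpos).2 hωx.le
      have := Real.log_nonneg h4
      linarith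
    have hD0 : 0 < D := by linarith
    have hψx : Real.log (lam * x / ω x) ≤ ψ x := by
      rw [Real.log_le_iff_le_exp (div_pos (mul_pos hlam0 hxIoc.1) hωxpos)]
      rw [div_le_iff₀ hωxpos]
      have := hltB x hxIoc.1 hxb
      linarith
    have hωDbound : ∀ s, m < s → s ≤ x → ω s * D ≤ K₀ * L := by
      intro s hs1 hs2
      have hsIoc : s ∈ Ioc (0:ℝ) T₀ := ⟨lt_trans hm_pos hs1, le_trans hs2 hxIoc.2⟩
      have hψs : ψ x ≤ ψ s := hψ hsIoc hxIoc hs2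
      have h5 : D ≤ 1 + ψ s := by rw [hDdef]; linarith
      have h6 := hbal s hsIoc
      rw [abs_of_neg (hlogneg s hsIoc)] at h6
      have h7 : -Real.log s ≤ L := hloglam s (le_trans h1m hs1.le) hsIoc.2
      have h8 : ω s * D ≤ ω s * (1 + ψ s) :=
        mul_le_mul_of_nonneg_left h5 (hωpos s hsIoc).le
      have h9 := mul_le_mul_of_nonneg_left h7 hK₀.le
      linarith only [h8, h6, h9]
    have hgr : G x ≤ G m * Real.exp ((K₀ * L / (μ₁ * D)) * Real.log x
        - (K₀ * L / (μ₁ * D)) * Real.log m) := by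
      apply gron G (fun s => (K₀ * L / (μ₁ * D)) * Real.log s) hmx.le
      · intro s hs
        exact (hGca s ⟨lt_of_lt_of_le hm_pos hs.1, le_trans hs.2 hxIoc.2⟩).continuousWithinAt
      · apply ContinuousOn.mul continuousOn_const
        apply ContinuousOn.log continuousOn_id
        intro s hs
        exact ne_of_gt (lt_of_lt_of_le hm_pos hs.1)
      · intro s hs
        have hs0 : 0 < s := lt_trans hm_pos hs.1
        have hsIoc : s ∈ Ioc (0:ℝ) T₀ := ⟨hs0, le_trans hs.2.le hxIoc.2⟩
        have hsIcc : s ∈ Icc (0:ℝ) T₀ := ⟨hs0.le, hsIoc.2⟩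
        refine ⟨lam ^ 2 * (deriv c s * (u s) ^ 2), (K₀ * L / (μ₁ * D)) * s⁻¹, ?_, ?_, ?_⟩
        · rw [hGdef]
          exact hasDerivAt_G u c lam s (hu1 s hsIcc) (hu2 s hsIcc) (hc1 s hsIoc) (hode s hsIcc)
        · exact (Real.hasDerivAt_log (ne_of_gt hs0)).const_mul (K₀ * L / (μ₁ * D))
        · have hωD := hωDbound s hs.1 hs.2.le
          have hωsb : ω s ≤ K₀ * L / D := (le_div_iff₀ hD0).2 hωD
          have hcp : |deriv c s| ≤ (K₀ * L / D) / s :=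
            le_trans (hc' s hsIoc) (by gcongr)
          have hr := rateG lam s (K₀ * L / D) (c s) (deriv c s) (u s) (deriv u s) μ₁
            hs0 hμ₁ (div_nonneg (mul_nonneg hK₀.le hL0.le) hD0.le) hcp (hcb s hsIoc).1
          have heq : (K₀ * L / D) / (μ₁ * s) = (K₀ * L / (μ₁ * D)) * s⁻¹ := by
            field_simp
          rw [heq] at hr
          simp only [hGdef]
          exact hr
    have hlogxm : Real.log x - Real.log m ≤ D := by
      have hxm : x / m ≤ lam * x / ω x := by
        rw [div_le_div_iff₀ hm_pos hωxpos]
        have h9 : ω x ≤ lam * m := le_trans (hωa x (lt_of_le_of_lt hm_a hmx) hxIoc.2)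
          (mul_le_mul_of_nonneg_left hm_a hlam0.le)
        have h10 := mul_le_mul_of_nonneg_left h9 hxIoc.1.le
        linarith only [h10]
      have h10 : Real.log (x / m) ≤ Real.log (lam * x / ω x) :=
        Real.log_le_log (div_pos hxIoc.1 hm_pos) hxm
      rw [Real.log_div (ne_of_gt hxIoc.1) (ne_of_gt hm_pos)] at h10
      rw [hDdef]
      linarith
    have hexp : (K₀ * L / (μ₁ * D)) * Real.log x - (K₀ * L / (μ₁ * D)) * Real.log m
        ≤ K₀ * L / μ₁ := by
      have hcoeff : (0:ℝ) ≤ K₀ * L / (μ₁ * D) :=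
        div_nonneg (mul_nonneg hK₀.le hL0.le) (mul_nonneg hμ₁.le hD0.le)
      have h11 : (K₀ * L / (μ₁ * D)) * (Real.log x - Real.log m)
          ≤ (K₀ * L / (μ₁ * D)) * D := mul_le_mul_of_nonneg_left hlogxm hcoeff
      have h12 : (K₀ * L / (μ₁ * D)) * D = K₀ * L / μ₁ := by
        have hDne : D ≠ 0 := ne_of_gt hD0
        field_simp
      linarith
    calc G x ≤ G m * Real.exp ((K₀ * L / (μ₁ * D)) * Real.log x
        - (K₀ * L / (μ₁ * D)) * Real.log m) := hgr
      _ ≤ G m * Real.exp (K₀ * L / μ₁) :=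
          mul_le_mul_of_nonneg_left (Real.exp_le_exp.2 hexp) (hGnn m ⟨hm_pos, le_trans hm_b hb_le⟩)
      _ = Real.exp (K₀ * L / μ₁) * G m := mul_comm _ _
  -- zone B combined
  have hEBmono : Real.exp (1 / μ₁) ≤ Real.exp ((1 + K₀ * L) / μ₁) := by
    apply Real.exp_le_exp.2
    have h1 : (0:ℝ) ≤ K₀ * L := mul_nonneg hK₀.le hL0.le
    gcongr
    linarith
  have bound2 : ∀ x, m < x → x < b → G x ≤ Real.exp ((1 + K₀ * L) / μ₁) * G a := by
    intro x hmx hxb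
    calc G x ≤ Real.exp (K₀ * L / μ₁) * G m := subB2 x hmx hxb
      _ ≤ Real.exp (K₀ * L / μ₁) * (Real.exp (1 / μ₁) * G a) :=
          mul_le_mul_of_nonneg_left (subB1 m hm_a le_rfl) (Real.exp_pos _).le
      _ = Real.exp (K₀ * L / μ₁ + 1 / μ₁) * G a := by rw [Real.exp_add]; ring
      _ = Real.exp ((1 + K₀ * L) / μ₁) * G a := by
          have heq : K₀ * L / μ₁ + 1 / μ₁ = (1 + K₀ * L) / μ₁ := by ring
          rw [heq]
  have chainB : ∀ x, a ≤ x → x ≤ b → G x ≤ Real.exp ((1 + K₀ * L) / μ₁) * G a := by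
    intro x hax hxb
    rcases le_or_gt x m with h | h
    · exact le_trans (subB1 x hax h) (mul_le_mul_of_nonneg_right hEBmono (hGnn a haIoc))
    · rcases lt_or_eq_of_le hxb with hlt | heq
      · exact bound2 x h hlt
      · rw [heq]
        have htend : Filter.Tendsto G (nhdsWithin b (Iio b)) (nhds (G b)) :=
          ((hGca b hbIoc).continuousWithinAt).tendsto
        apply le_of_tendsto htend
        filter_upwards [Ioo_mem_nhdsLT_of_mem (show b ∈ Ioc m b from ⟨heq ▸ h, le_refl b⟩)]
          with s hs
        exact bound2 s hs.1 hs.2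
  -- zone C preliminaries
  set Wc := max 1 (K₀ * L) with hWcdef
  have hWc1 : (1:ℝ) ≤ Wc := le_max_left _ _
  have hWc0 : (0:ℝ) ≤ Wc := by linarith
  have hωWc : ∀ s, b < s → s ≤ T₀ → ω s ≤ Wc := by
    intro s h1 h2
    have hsIoc : s ∈ Ioc (0:ℝ) T₀ := ⟨lt_trans hb_pos h1, h2⟩
    rcases le_or_gt (1 / lam) s with hc | hc
    · have h3 := hωbound s hsIoc
      have h4 := mul_le_mul_of_nonneg_left (hloglam s hc h2) hK₀.le
      exact le_trans (by linarith only [h3, h4]) (le_max_right 1 (K₀ * L))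
    · have h3 := hexp1 s hsIoc
      have h4 := hCbound s h1 h2
      have h5 : lam * b ≤ lam * s := mul_le_mul_of_nonneg_left h1.le hlam0.le
      have h6 : lam * s < 1 := by
        have h7 := mul_lt_mul_of_pos_left hc hlam0
        have h8 : lam * (1 / lam) = 1 := by field_simp
        linarith only [h7, h8]
      linarith only [h3, h4, h5, h6, hWc1]
  have hHca : ∀ s ∈ Ioc (0:ℝ) T₀, ContinuousAt HH s := by
    intro s hs
    have hsIcc : s ∈ Icc (0:ℝ) T₀ := ⟨hs.1.le, hs.2⟩
    have hcspos := hcpos s hs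
    have hσpos : 0 < Real.sqrt (c s) := Real.sqrt_pos.2 hcspos
    have c1 : ContinuousAt (fun r => Real.sqrt (c r)) s :=
      Real.continuous_sqrt.continuousAt.comp (hc1 s hs).continuousAt
    have hc4ne : 4 * c s ≠ 0 := by
      have : (0:ℝ) < 4 * c s := by linarith
      exact ne_of_gt this
    have c2 : ContinuousAt (fun r => deriv u r + deriv c r / (4 * c r) * u r) s :=
      (hu2 s hsIcc).continuousAt.add
        (((hc2 s hs).continuousAt.div ((hc1 s hs).continuousAt.const_mul 4) hc4ne).mul
          (hu1 s hsIcc).continuousAt)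
    rw [hHdef]
    exact ((c2.pow 2).div c1 (ne_of_gt hσpos)).add
      ((c1.mul ((hu1 s hsIcc).continuousAt.pow 2)).const_mul (lam ^ 2))
  have hHnn : ∀ s ∈ Ioc (0:ℝ) T₀, 0 ≤ HH s := by
    intro s hs
    have hσpos : 0 < Real.sqrt (c s) := Real.sqrt_pos.2 (hcpos s hs)
    rw [hHdef]
    exact add_nonneg (div_nonneg (sq_nonneg _) hσpos.le)
      (mul_nonneg (sq_nonneg lam) (mul_nonneg hσpos.le (sq_nonneg _)))
  have chainC : ∀ x, b < x → x ≤ T₀ → HH x ≤ Real.exp (C₁ * Wc) * HH b := by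
    intro x hbx hxT
    have hx0 : 0 < x := lt_trans hb_pos hbx
    have hgr : HH x ≤ HH b * Real.exp ((-(C₁ * Wc * b) * x⁻¹) - (-(C₁ * Wc * b) * b⁻¹)) := by
      apply gron HH (fun s => -(C₁ * Wc * b) * s⁻¹) hbx.le
      · intro s hs
        exact (hHca s ⟨lt_of_lt_of_le hb_pos hs.1, le_trans hs.2 hxT⟩).continuousWithinAt
      · apply ContinuousOn.mul continuousOn_const
        apply ContinuousOn.inv₀ continuousOn_id
        intro s hs
        exact ne_of_gt (lt_of_lt_of_le hb_pos hs.1)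
      · intro s hs
        have hs0 : 0 < s := lt_trans hb_pos hs.1
        have hsIoc : s ∈ Ioc (0:ℝ) T₀ := ⟨hs0, le_trans hs.2.le hxT⟩
        have hsIcc : s ∈ Icc (0:ℝ) T₀ := ⟨hs0.le, hsIoc.2⟩
        have hcspos := hcpos s hsIoc
        have hσpos : 0 < Real.sqrt (c s) := Real.sqrt_pos.2 hcspos
        refine ⟨2 * (deriv (deriv c) s / (4 * c s) - 5 * (deriv c s / (4 * c s)) ^ 2) /
            Real.sqrt (c s) * (u s * (deriv u s + deriv c s / (4 * c s) * u s)),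
          -(C₁ * Wc * b) * -((s:ℝ) ^ 2)⁻¹, ?_, ?_, ?_⟩
        · rw [hHdef]
          exact hasDerivAt_H u c lam s (hu1 s hsIcc) (hu2 s hsIcc) (hc1 s hsIoc)
            (hc2 s hsIoc) hcspos (hode s hsIcc)
        · exact (hasDerivAt_inv (ne_of_gt hs0)).const_mul (-(C₁ * Wc * b))
        · have hAM : 2 * lam * (|u s| * |deriv u s + deriv c s / (4 * c s) * u s|)
              ≤ HH s := by
            have h9 := amgm (u s) (deriv u s + deriv c s / (4 * c s) * u s)
              (Real.sqrt (c s)) lam hσpos hlam0.le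
            rw [hHdef]
            exact h9
          have hΔ := deltaBound (deriv (deriv c) s) (deriv c s) (c s) s (ω s)
            (Real.exp (ψ s)) Wc b lam μ₁ (Real.sqrt (c s)) hμ₁ (hcb s hsIoc).1 hs0 hlam0
            (hωpos s hsIoc).le (Real.one_le_exp (hψpos s hsIoc).le) (hc'' s hsIoc)
            (hc' s hsIoc) (hCbound s hs.1 hsIoc.2) (hωWc s hs.1 hsIoc.2) hWc0 hb_pos.le
            (Real.sqrt_le_sqrt (hcb s hsIoc).1)
          have hρeq : (1 / (4 * μ₁) + 5 / (16 * μ₁ ^ 2)) / Real.sqrt μ₁ * Wc * b / s ^ 2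
              = C₁ * Wc * b / s ^ 2 := by rw [hC₁def, hC₀def]
          rw [hρeq] at hΔ
          have hrH := rateH (deriv (deriv c) s / (4 * c s) - 5 * (deriv c s / (4 * c s)) ^ 2)
            (Real.sqrt (c s)) (u s) (deriv u s + deriv c s / (4 * c s) * u s) (HH s)
            (C₁ * Wc * b / s ^ 2) lam hσpos hlam0 (hHnn s hsIoc) hAM hΔ
          have hre : -(C₁ * Wc * b) * -((s:ℝ) ^ 2)⁻¹ = C₁ * Wc * b / s ^ 2 := by
            rw [neg_mul_neg, div_eq_mul_inv]
          rw [hre]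
          exact hrH
    have hexp : (-(C₁ * Wc * b) * x⁻¹) - (-(C₁ * Wc * b) * b⁻¹) ≤ C₁ * Wc := by
      have hbne : b ≠ 0 := ne_of_gt hb_pos
      have hxne : x ≠ 0 := ne_of_gt hx0
      have h1 : b / x ≤ 1 := (div_le_one hx0).2 hbx.le
      have h2 : -(C₁ * Wc * b) * x⁻¹ - -(C₁ * Wc * b) * b⁻¹ = C₁ * Wc * (1 - b / x) := by
        field_simp
        ring
      rw [h2]
      have h3 : (0:ℝ) ≤ C₁ * Wc := mul_nonneg hC₁.le hWc0
      have h4 : 1 - b / x ≤ 1 := by linarith only [h1, div_nonneg hb_pos.le hx0.le]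
      have h5 := mul_le_mul_of_nonneg_left h4 h3
      linarith only [h5]
    calc HH x ≤ HH b * Real.exp ((-(C₁ * Wc * b) * x⁻¹) - (-(C₁ * Wc * b) * b⁻¹)) := hgr
      _ ≤ HH b * Real.exp (C₁ * Wc) :=
          mul_le_mul_of_nonneg_left (Real.exp_le_exp.2 hexp) (hHnn b hbIoc)
      _ = Real.exp (C₁ * Wc) * HH b := mul_comm _ _
  -- pointwise equivalences between energies
  have hFG : ∀ s ∈ Ioc (0:ℝ) T₀, F s ≤ (1 + 1 / μ₁) * G s := by
    intro s hs
    have h1 : μ₁ ≤ c s := (hcb s hs).1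
    have h3 : (1:ℝ) ≤ c s / μ₁ := (one_le_div hμ₁).2 h1
    have h4 : lam ^ 2 * (u s) ^ 2 * 1 ≤ lam ^ 2 * (u s) ^ 2 * (c s / μ₁) :=
      mul_le_mul_of_nonneg_left h3 (by positivity)
    have h5 : lam ^ 2 * (u s) ^ 2 * (c s / μ₁) = (1 / μ₁) * (lam ^ 2 * (c s * (u s) ^ 2)) := by
      field_simp
    have h6 : (0:ℝ) ≤ (1 / μ₁) * (deriv u s) ^ 2 := by positivity
    have h7 : (0:ℝ) ≤ lam ^ 2 * (c s * (u s) ^ 2) :=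
      mul_nonneg (sq_nonneg lam) (mul_nonneg (hcpos s hs).le (sq_nonneg _))
    simp only [hFdef, hGdef]
    linarith only [h4, h5, h6, h7]
  have hGF : ∀ s ∈ Ioc (0:ℝ) T₀, G s ≤ (1 + μ₂) * F s := by
    intro s hs
    have h1 : c s * (u s) ^ 2 ≤ μ₂ * (u s) ^ 2 :=
      mul_le_mul_of_nonneg_right (hcb s hs).2 (sq_nonneg _)
    have h2 := mul_le_mul_of_nonneg_left h1 (sq_nonneg lam)
    have h3 : (0:ℝ) ≤ μ₂ * (deriv u s) ^ 2 := mul_nonneg hμ₂.le (sq_nonneg _)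
    have h4 : (0:ℝ) ≤ lam ^ 2 * (u s) ^ 2 := by positivity
    simp only [hFdef, hGdef]
    linarith only [h2, h3, h4]
  have hdeltab : b < T₀ → ∀ s, b ≤ s → s ≤ T₀ → |deriv c s / (4 * c s)| ≤ lam / (4 * μ₁) := by
    intro hbT s h1 h2
    have hsIoc : s ∈ Ioc (0:ℝ) T₀ := ⟨lt_of_lt_of_le hb_pos h1, h2⟩
    have key : ∀ r, b < r → r ≤ T₀ → |deriv c r| ≤ lam * b / r := by
      intro r hr1 hr2
      have hrIoc : r ∈ Ioc (0:ℝ) T₀ := ⟨lt_trans hb_pos hr1, hr2⟩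
      have h3 := hc' r hrIoc
      have h4 : ω r ≤ lam * b := le_trans (hexp1 r hrIoc) (hCbound r hr1 hr2)
      have hr0 : 0 < r := hrIoc.1
      calc |deriv c r| ≤ ω r / r := h3
        _ ≤ lam * b / r := by gcongr
    have habs : |deriv c s| ≤ lam := by
      rcases lt_or_eq_of_le h1 with hlt | heq
      · have h5 := key s hlt h2
        have h6 : lam * b / s ≤ lam := by
          rw [div_le_iff₀ (lt_trans hb_pos hlt)]
          have h7 : lam * b ≤ lam * s := mul_le_mul_of_nonneg_left hlt.le hlam0.le
          linarith only [h7]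
        linarith only [h5, h6]
      · rw [← heq]
        have hcont : ContinuousAt (deriv c) b := (hc2 b hbIoc).continuousAt
        have ht1 : Filter.Tendsto (fun r => |deriv c r|) (nhdsWithin b (Ioi b))
            (nhds (|deriv c b|)) :=
          ((continuous_abs.continuousAt.comp hcont).tendsto).mono_left nhdsWithin_le_nhds
        have ht2 : Filter.Tendsto (fun r => lam * b / r) (nhdsWithin b (Ioi b))
            (nhds (lam * b / b)) :=
          ((continuousAt_const.div continuousAt_id (ne_of_gt hb_pos)).tendsto).mono_left
            nhdsWithin_le_nhds
        have heq2 : lam * b / b = lam := by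
          field_simp
        rw [← heq2]
        apply le_of_tendsto_of_tendsto ht1 ht2
        filter_upwards [Ioo_mem_nhdsGT_of_mem (show b ∈ Ico b T₀ from ⟨le_refl b, hbT⟩)]
          with r hr
        exact key r hr.1 hr.2.le
    have hc4 : (0:ℝ) < 4 * c s := by linarith [hcpos s hsIoc]
    rw [abs_div, abs_of_pos hc4]
    exact div_le_div₀ hlam0.le habs (by linarith) (by linarith [(hcb s hsIoc).1])
  have hFHequiv : b < T₀ → ∀ s, b ≤ s → s ≤ T₀ → F s ≤ CH * HH s ∧ HH s ≤ CH' * F s := by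
    intro hbT s h1 h2
    have hsIoc : s ∈ Ioc (0:ℝ) T₀ := ⟨lt_of_lt_of_le hb_pos h1, h2⟩
    have hd := hdeltab hbT s h1 h2
    have hσ1 : Real.sqrt μ₁ ≤ Real.sqrt (c s) := Real.sqrt_le_sqrt (hcb s hsIoc).1
    have hσ2 : Real.sqrt (c s) ≤ Real.sqrt μ₂ := Real.sqrt_le_sqrt (hcb s hsIoc).2
    constructor
    · have h9 := equiv1 μ₁ μ₂ (Real.sqrt (c s)) lam (u s) (deriv u s)
        (deriv c s / (4 * c s)) hμ₁ hσ1 hσ2 hlam0 hd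
      simp only [hFdef, hHdef, hCHdef]
      exact h9
    · have h9 := equiv2 μ₁ μ₂ (Real.sqrt (c s)) lam (u s) (deriv u s)
        (deriv c s / (4 * c s)) hμ₁ hσ1 hσ2 hlam0 hd
      simp only [hFdef, hHdef, hCH'def]
      exact h9
  -- numeric padding facts
  set EA := Real.exp ((1 + μ₂) * Wc) with hEAdef
  set EB := Real.exp ((1 + K₀ * L) / μ₁) with hEBdef
  set EC := Real.exp (C₁ * Wc) with hECdef
  have hKL0 : (0:ℝ) ≤ K₀ * L := mul_nonneg hK₀.le hL0.le
  have hEA1 : 1 ≤ EA := by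
    rw [hEAdef]
    exact Real.one_le_exp (mul_nonneg (by linarith) hWc0)
  have hEB1 : 1 ≤ EB := by
    rw [hEBdef]
    exact Real.one_le_exp (div_nonneg (by linarith) hμ₁.le)
  have hEC1 : 1 ≤ EC := by
    rw [hECdef]
    exact Real.one_le_exp (mul_nonneg hC₁.le hWc0)
  have hEA0 : (0:ℝ) ≤ EA := le_trans zero_le_one hEA1
  have hEB0 : (0:ℝ) ≤ EB := le_trans zero_le_one hEB1
  have hEC0 : (0:ℝ) ≤ EC := le_trans zero_le_one hEC1
  have hF0 : (0:ℝ) ≤ F 0 := hFnn 0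
  have hP1 : (0:ℝ) ≤ 1 + 1 / μ₁ := by
    have := one_div_pos.2 hμ₁
    linarith
  have hP2 : (0:ℝ) ≤ 1 + μ₂ := by linarith
  have hCH1 : (1:ℝ) ≤ 1 + CH * CH' := by
    have h1 := mul_pos hCH hCH'
    linarith only [h1]
  have hP3 : (0:ℝ) ≤ 1 + CH * CH' := by linarith only [hCH1]
  have boundF2 : ∀ x, a ≤ x → x ≤ b → F x ≤ (1 + 1 / μ₁) * ((1 + μ₂) * (EB * (EA * F 0))) := by
    intro x hax hxb
    have hxIoc : x ∈ Ioc (0:ℝ) T₀ := ⟨lt_of_lt_of_le ha_pos hax, le_trans hxb hb_le⟩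
    calc F x ≤ (1 + 1 / μ₁) * G x := hFG x hxIoc
      _ ≤ (1 + 1 / μ₁) * (EB * G a) :=
          mul_le_mul_of_nonneg_left (chainB x hax hxb) hP1
      _ ≤ (1 + 1 / μ₁) * (EB * ((1 + μ₂) * F a)) := by
          apply mul_le_mul_of_nonneg_left _ hP1
          exact mul_le_mul_of_nonneg_left (hGF a haIoc) hEB0
      _ ≤ (1 + 1 / μ₁) * (EB * ((1 + μ₂) * (EA * F 0))) := by
          apply mul_le_mul_of_nonneg_left _ hP1
          apply mul_le_mul_of_nonneg_left _ hEB0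
          exact mul_le_mul_of_nonneg_left (chainA a ⟨ha_pos.le, ha_le⟩ le_rfl) hP2
      _ = (1 + 1 / μ₁) * ((1 + μ₂) * (EB * (EA * F 0))) := by ring
  have boundFall : F t ≤ (1 + CH * CH') *
      ((1 + 1 / μ₁) * ((1 + μ₂) * (EC * (EB * (EA * F 0))))) := by
    have hZ : (0:ℝ) ≤ (1 + 1 / μ₁) * ((1 + μ₂) * (EB * (EA * F 0))) :=
      mul_nonneg hP1 (mul_nonneg hP2 (mul_nonneg hEB0 (mul_nonneg hEA0 hF0)))
    rcases le_or_gt t b with h2 | h2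
    · have hFxb : F t ≤ (1 + 1 / μ₁) * ((1 + μ₂) * (EB * (EA * F 0))) := by
        rcases le_or_gt t a with h1 | h1
        · have h3 := chainA t ht h1
          have q0 : (0:ℝ) ≤ EA * F 0 := mul_nonneg hEA0 hF0
          have s1 : EA * F 0 ≤ EB * (EA * F 0) := le_mul_of_one_le_left q0 hEB1
          have s2 : EB * (EA * F 0) ≤ (1 + μ₂) * (EB * (EA * F 0)) :=
            le_mul_of_one_le_left (mul_nonneg hEB0 q0) (by linarith)
          have s3 : (1 + μ₂) * (EB * (EA * F 0))
              ≤ (1 + 1 / μ₁) * ((1 + μ₂) * (EB * (EA * F 0))) :=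
            le_mul_of_one_le_left (mul_nonneg hP2 (mul_nonneg hEB0 q0))
              (by have := one_div_pos.2 hμ₁; linarith)
          exact le_trans h3 (le_trans s1 (le_trans s2 s3))
        · exact boundF2 t h1.le h2
      have q0 : (0:ℝ) ≤ EB * (EA * F 0) := mul_nonneg hEB0 (mul_nonneg hEA0 hF0)
      have s1 : EB * (EA * F 0) ≤ EC * (EB * (EA * F 0)) := le_mul_of_one_le_left q0 hEC1
      have s2 : (1 + 1 / μ₁) * ((1 + μ₂) * (EB * (EA * F 0)))
          ≤ (1 + 1 / μ₁) * ((1 + μ₂) * (EC * (EB * (EA * F 0)))) :=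
        mul_le_mul_of_nonneg_left (mul_le_mul_of_nonneg_left s1 hP2) hP1
      have q1 : (0:ℝ) ≤ (1 + 1 / μ₁) * ((1 + μ₂) * (EC * (EB * (EA * F 0)))) :=
        mul_nonneg hP1 (mul_nonneg hP2 (mul_nonneg hEC0 q0))
      have s3 := le_mul_of_one_le_left q1 hCH1
      exact le_trans hFxb (le_trans s2 s3)
    · have hbT : b < T₀ := lt_of_lt_of_le h2 ht.2
      have e1 := (hFHequiv hbT t h2.le ht.2).1
      have e2 := chainC t h2 ht.2
      have e3 := (hFHequiv hbT b le_rfl hb_le).2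
      have e4 := boundF2 b hab le_rfl
      have hHb0 : (0:ℝ) ≤ HH b := hHnn b hbIoc
      have c1 : F t ≤ CH * (EC * HH b) := le_trans e1 (mul_le_mul_of_nonneg_left e2 hCH.le)
      have c2 : HH b ≤ CH' * ((1 + 1 / μ₁) * ((1 + μ₂) * (EB * (EA * F 0)))) :=
        le_trans e3 (mul_le_mul_of_nonneg_left e4 hCH'.le)
      have c3 : F t ≤ CH * (EC * (CH' * ((1 + 1 / μ₁) * ((1 + μ₂) * (EB * (EA * F 0)))))) :=
        le_trans c1 (mul_le_mul_of_nonneg_left (mul_le_mul_of_nonneg_left c2 hEC0) hCH.le)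
      have c4 : CH * (EC * (CH' * ((1 + 1 / μ₁) * ((1 + μ₂) * (EB * (EA * F 0))))))
          ≤ (1 + CH * CH') * (EC * ((1 + 1 / μ₁) * ((1 + μ₂) * (EB * (EA * F 0))))) := by
        have q2 : (0:ℝ) ≤ EC * ((1 + 1 / μ₁) * ((1 + μ₂) * (EB * (EA * F 0)))) :=
          mul_nonneg hEC0 hZ
        have hre : CH * (EC * (CH' * ((1 + 1 / μ₁) * ((1 + μ₂) * (EB * (EA * F 0))))))
            = (CH * CH') * (EC * ((1 + 1 / μ₁) * ((1 + μ₂) * (EB * (EA * F 0))))) := by ring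
        rw [hre]
        exact mul_le_mul_of_nonneg_right (by linarith only [hCH1]) q2
      have c5 : (1 + CH * CH') * (EC * ((1 + 1 / μ₁) * ((1 + μ₂) * (EB * (EA * F 0)))))
          = (1 + CH * CH') * ((1 + 1 / μ₁) * ((1 + μ₂) * (EC * (EB * (EA * F 0))))) := by
        ring
      exact le_trans c3 (le_trans c4 (le_of_eq c5))
  -- convert to the target form
  have hrp : Real.rpow lam (K₀ * A₀) = Real.exp (L * (K₀ * A₀)) := by
    rw [hLdef]
    exact Real.rpow_def_of_pos hlam0 _
  have hET : EC * (EB * EA) ≤ Real.exp A₀ * Real.rpow lam (K₀ * A₀) := by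
    rw [hEAdef, hEBdef, hECdef, hrp, ← Real.exp_add, ← Real.exp_add, ← Real.exp_add]
    apply Real.exp_le_exp.2
    have hmax : max 1 (K₀ * L) ≤ 1 + K₀ * L := max_le (by linarith) (by linarith)
    have hWcle : Wc ≤ 1 + K₀ * L := by rw [hWcdef]; exact hmax
    have hexpand : A₀ + L * (K₀ * A₀)
        = (1 + μ₂) * (1 + K₀ * L) + (1 + K₀ * L) / μ₁ + C₁ * (1 + K₀ * L) := by
      rw [hA₀def]
      ring
    have h1 : C₁ * Wc ≤ C₁ * (1 + K₀ * L) := mul_le_mul_of_nonneg_left hWcle hC₁.le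
    have h2 : (1 + μ₂) * Wc ≤ (1 + μ₂) * (1 + K₀ * L) :=
      mul_le_mul_of_nonneg_left hWcle hP2
    linarith only [h1, h2, hexpand]
  have final : F t ≤ ((1 + CH * CH') * ((1 + 1 / μ₁) * ((1 + μ₂) * Real.exp A₀))) * F 0 *
      Real.rpow lam (K₀ * A₀) := by
    have h1 : (1 + CH * CH') * ((1 + 1 / μ₁) * ((1 + μ₂) * (EC * (EB * (EA * F 0)))))
        = ((1 + CH * CH') * ((1 + 1 / μ₁) * (1 + μ₂))) * ((EC * (EB * EA)) * F 0) := by ring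
    have h2 : ((1 + CH * CH') * ((1 + 1 / μ₁) * ((1 + μ₂) * Real.exp A₀))) * F 0 *
          Real.rpow lam (K₀ * A₀)
        = ((1 + CH * CH') * ((1 + 1 / μ₁) * (1 + μ₂)))
            * ((Real.exp A₀ * Real.rpow lam (K₀ * A₀)) * F 0) := by ring
    have h3 : (EC * (EB * EA)) * F 0 ≤ (Real.exp A₀ * Real.rpow lam (K₀ * A₀)) * F 0 :=
      mul_le_mul_of_nonneg_right hET hF0
    have h4 : (0:ℝ) ≤ (1 + CH * CH') * ((1 + 1 / μ₁) * (1 + μ₂)) :=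
      mul_nonneg hP3 (mul_nonneg hP1 hP2)
    calc F t ≤ (1 + CH * CH') * ((1 + 1 / μ₁) * ((1 + μ₂) * (EC * (EB * (EA * F 0))))) :=
          boundFall
      _ = ((1 + CH * CH') * ((1 + 1 / μ₁) * (1 + μ₂))) * ((EC * (EB * EA)) * F 0) := h1
      _ ≤ ((1 + CH * CH') * ((1 + 1 / μ₁) * (1 + μ₂)))
            * ((Real.exp A₀ * Real.rpow lam (K₀ * A₀)) * F 0) :=
          mul_le_mul_of_nonneg_left h3 h4
      _ = ((1 + CH * CH') * ((1 + 1 / μ₁) * ((1 + μ₂) * Real.exp A₀))) * F 0 *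
            Real.rpow lam (K₀ * A₀) := h2.symm
  exact final
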